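/- Negative dependence of multinomial cell loads (Lemma 4.2, specialized to equal cell probabilities): for all positive integers n, m and every natural number L, |{f : Fin n → Fin m ; ∀ k ∈ Fin m, |f⁻¹(k)| ≤ L}| / m^n ≤ ( Σ_{j=0}^{min(L,n)} C(n,j) · (1/m)^j · (1 − 1/m)^{n−j} )^m; that is, the probability that all fibers of a uniformly random function from Fin n to Fin m have size at most L is at most the product over the m cells of the corresponding Binomial(n, 1/m) tail probabilities. -/

import Mathlib

open Finset

/-- number of functions `Fin r → Fin m` avoiding `a` whose fibers over `S` all have size `≤ L`. -/
def cntA (m L : ℕ) (a : Fin m) (S : Finset (Fin m)) (r : ℕ) : ℕ :=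
  (Finset.univ.filter fun g : Fin r → Fin m =>
    (∀ x, g x ≠ a) ∧ ∀ k ∈ S, (Finset.univ.filter fun x => g x = k).card ≤ L).card

lemma cntA_succ_le (m L : ℕ) (a : Fin m) (S : Finset (Fin m)) (r : ℕ) :
    cntA m L a S (r + 1) ≤ cntA m L a S r * (m - 1) := by
  classical
  unfold cntA
  have := Finset.card_le_card_of_injOn
    (f := fun h : Fin (r+1) → Fin m => (h ∘ Fin.castSucc, h (Fin.last r)))
    (s := Finset.univ.filter fun h : Fin (r+1) → Fin m =>
      (∀ x, h x ≠ a) ∧ ∀ k ∈ S, (Finset.univ.filter fun x => h x = k).card ≤ L)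
    (t := (Finset.univ.filter fun g : Fin r → Fin m =>
      (∀ x, g x ≠ a) ∧ ∀ k ∈ S, (Finset.univ.filter fun x => g x = k).card ≤ L) ×ˢ
      Finset.univ.erase a)
    ?_ ?_
  · refine le_trans this ?_
    rw [Finset.card_product, Finset.card_erase_of_mem (Finset.mem_univ a), Finset.card_univ,
      Fintype.card_fin]
  · intro h hh
    rw [Finset.mem_coe, Finset.mem_filter] at hh
    obtain ⟨-, hav, hgood⟩ := hh
    rw [Finset.mem_coe, Finset.mem_product]
    constructor
    · rw [Finset.mem_filter]
      refine ⟨Finset.mem_univ _, fun x => hav _, fun k hk => le_trans ?_ (hgood k hk)⟩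
      exact Finset.card_le_card_of_injOn (fun x => Fin.castSucc x)
        (fun x hx => by simpa using (Finset.mem_filter.mp hx).2)
        ((Fin.castSucc_injective r).injOn)
    · exact Finset.mem_erase.mpr ⟨hav _, Finset.mem_univ _⟩
  · intro h₁ h₁m h₂ h₂m hEq
    simp only [Prod.mk.injEq] at hEq
    funext x
    induction x using Fin.lastCases with
    | last => exact hEq.2
    | cast i => exact congrFun hEq.1 i

lemma cntA_mono (m L : ℕ) (a : Fin m) (S : Finset (Fin m)) (r r' : ℕ) (h : r ≤ r') :
    cntA m L a S r' * (m - 1) ^ r ≤ (m - 1) ^ r' * cntA m L a S r := by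
  obtain ⟨d, rfl⟩ := Nat.exists_eq_add_of_le h
  induction d with
  | zero => simp [Nat.mul_comm]
  | succ d ih =>
    have h1 : cntA m L a S (r + (d+1)) ≤ cntA m L a S (r + d) * (m - 1) :=
      cntA_succ_le m L a S (r + d)
    calc cntA m L a S (r + (d+1)) * (m-1)^r
        ≤ cntA m L a S (r + d) * (m-1) * (m-1)^r := Nat.mul_le_mul_right _ h1
      _ = (cntA m L a S (r + d) * (m-1)^r) * (m-1) := by ring
      _ ≤ ((m-1)^(r+d) * cntA m L a S r) * (m-1) := Nat.mul_le_mul_right _ (ih (Nat.le_add_right r d))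
      _ = (m-1)^(r+(d+1)) * cntA m L a S r := by ring

lemma cntA_empty (m L : ℕ) (a : Fin m) (r : ℕ) : cntA m L a ∅ r = (m - 1) ^ r := by
  classical
  unfold cntA
  have : (Finset.univ.filter fun g : Fin r → Fin m =>
      (∀ x, g x ≠ a) ∧ ∀ k ∈ (∅ : Finset (Fin m)), (Finset.univ.filter fun x => g x = k).card ≤ L)
      = Fintype.piFinset (fun _ : Fin r => Finset.univ.erase a) := by
    ext g
    simp [Fintype.mem_piFinset]
  rw [this, Fintype.card_piFinset]
  simp [Finset.card_erase_of_mem]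

lemma cheby (I J : Finset ℕ) (hIJ : I ⊆ J) (A B : ℕ → ℕ)
    (h : ∀ s ∈ I, ∀ t ∈ J, t ∉ I → B s * A t ≤ A s * B t) :
    (∑ s ∈ I, B s) * (∑ t ∈ J, A t) ≤ (∑ s ∈ I, A s) * (∑ t ∈ J, B t) := by
  classical
  have hJ : ∀ C : ℕ → ℕ, ∑ t ∈ J, C t = ∑ t ∈ I, C t + ∑ t ∈ J \ I, C t := by
    intro C
    rw [← Finset.sum_union Finset.disjoint_sdiff, Finset.union_sdiff_of_subset hIJ]
  rw [hJ A, hJ B, Nat.mul_add, Nat.mul_add]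
  have key : (∑ s ∈ I, B s) * (∑ t ∈ J \ I, A t) ≤ (∑ s ∈ I, A s) * (∑ t ∈ J \ I, B t) := by
    rw [Finset.sum_mul_sum, Finset.sum_mul_sum]
    refine Finset.sum_le_sum fun s hs => Finset.sum_le_sum fun t ht => ?_
    exact h s hs t (Finset.mem_sdiff.mp ht).1 (Finset.mem_sdiff.mp ht).2
  have eq1 : (∑ s ∈ I, B s) * (∑ t ∈ I, A t) = (∑ s ∈ I, A s) * (∑ t ∈ I, B t) := by
    ring
  omega

lemma fixedFiber_card (n m L : ℕ) (a : Fin m) (S : Finset (Fin m)) (ha : a ∉ S)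
    (T : Finset (Fin n)) :
    (Finset.univ.filter fun f : Fin n → Fin m =>
        Finset.univ.filter (fun x => f x = a) = T ∧
        ∀ k ∈ S, (Finset.univ.filter fun x => f x = k).card ≤ L).card
      = cntA m L a S Tᶜ.card := by
  classical
  set c : Finset (Fin n) := Tᶜ with hc
  set e := c.equivFin with he
  have hmemc : ∀ x : Fin n, x ∈ c ↔ x ∉ T := fun x => Finset.mem_compl
  -- fiber cardinality transfer
  have hfib : ∀ (f : Fin n → Fin m), (∀ x, f x = a ↔ x ∈ T) → ∀ k, k ≠ a →
      (Finset.univ.filter fun x => f x = k).card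
        = (Finset.univ.filter fun j : Fin c.card => f (e.symm j) = k).card := by
    intro f hf k hk
    refine Finset.card_bij' (fun x hx => e ⟨x, ?_⟩) (fun j _ => (e.symm j : Fin n)) ?_ ?_ ?_ ?_
    · rw [hmemc]
      intro hxT
      exact hk (((Finset.mem_filter.mp hx).2).symm.trans ((hf x).mpr hxT))
    · intro x hx
      rw [Finset.mem_filter] at hx ⊢
      refine ⟨Finset.mem_univ _, ?_⟩
      rw [Equiv.symm_apply_apply]
      exact hx.2
    · intro j hj
      rw [Finset.mem_filter] at hj ⊢
      exact ⟨Finset.mem_univ _, hj.2⟩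
    · intro x hx
      simp
    · intro j hj
      simp
  unfold cntA
  refine Finset.card_bij (fun f _ => fun j : Fin c.card => f (e.symm j)) ?_ ?_ ?_
  · intro f hf
    rw [Finset.mem_filter] at hf
    obtain ⟨-, hfT, hgood⟩ := hf
    have hfa : ∀ x, f x = a ↔ x ∈ T := by
      intro x; rw [← hfT]; simp
    rw [Finset.mem_filter]
    refine ⟨Finset.mem_univ _, fun j => ?_, fun k hk => ?_⟩
    · intro hja
      exact (hmemc _).mp (e.symm j).2 ((hfa _).mp hja)
    · have hkka : k ≠ a := fun h => ha (h ▸ hk)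
      rw [← hfib f hfa k hkka]
      exact hgood k hk
  · intro f₁ h₁ f₂ h₂ hEq
    rw [Finset.mem_filter] at h₁ h₂
    have hfa₁ : ∀ x, f₁ x = a ↔ x ∈ T := by intro x; rw [← h₁.2.1]; simp
    have hfa₂ : ∀ x, f₂ x = a ↔ x ∈ T := by intro x; rw [← h₂.2.1]; simp
    funext x
    by_cases hx : x ∈ T
    · rw [(hfa₁ x).mpr hx, (hfa₂ x).mpr hx]
    · have hxc : x ∈ c := (hmemc x).mpr hx
      have h3 := congrFun hEq (e ⟨x, hxc⟩)
      simpa using h3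
  · intro g hg
    rw [Finset.mem_filter] at hg
    obtain ⟨-, hga, hgood⟩ := hg
    set f : Fin n → Fin m := fun x => if hx : x ∈ c then g (e ⟨x, hx⟩) else a with hfdef
    have hfa : ∀ x, f x = a ↔ x ∈ T := by
      intro x
      by_cases hx : x ∈ c
      · rw [hfdef]
        simp only [dif_pos hx]
        simp only [hga (e ⟨x, hx⟩), false_iff]
        exact (hmemc x).mp hx
      · rw [hfdef]
        simp only [dif_neg hx, true_iff]
        by_contra hxT
        exact hx ((hmemc x).mpr hxT)
    have hFg : (fun j : Fin c.card => f (e.symm j)) = g := by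
      funext j
      have hjc : ((e.symm j : { x // x ∈ c }) : Fin n) ∈ c := (e.symm j).2
      rw [hfdef]
      simp only [dif_pos hjc]
      congr 1
      rw [Subtype.coe_eta]
      exact e.apply_symm_apply j
    refine ⟨f, ?_, hFg⟩
    rw [Finset.mem_filter]
    refine ⟨Finset.mem_univ _, ?_, fun k hk => ?_⟩
    · ext x
      simp only [Finset.mem_filter, Finset.mem_univ, true_and]
      exact hfa x
    · have hkka : k ≠ a := fun h => ha (h ▸ hk)
      rw [hfib f hfa k hkka, Finset.filter_congr (fun j _ => by rw [congrFun hFg j])]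
      exact hgood k hk

lemma Bset_card (n m L : ℕ) (a : Fin m) (S : Finset (Fin m)) (ha : a ∉ S) (t : ℕ) :
    (Finset.univ.filter fun f : Fin n → Fin m =>
        (Finset.univ.filter fun x => f x = a).card = t ∧
        ∀ k ∈ S, (Finset.univ.filter fun x => f x = k).card ≤ L).card
      = n.choose t * cntA m L a S (n - t) := by
  classical
  rw [Finset.card_eq_sum_card_fiberwise
      (f := fun f : Fin n → Fin m => Finset.univ.filter fun x => f x = a)
      (t := Finset.powersetCard t (Finset.univ : Finset (Fin n)))
      (fun f hf => Finset.mem_powersetCard_univ.mpr (Finset.mem_filter.mp hf).2.1)]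
  have hterm : ∀ T ∈ Finset.powersetCard t (Finset.univ : Finset (Fin n)),
      ((Finset.univ.filter fun f : Fin n → Fin m =>
          (Finset.univ.filter fun x => f x = a).card = t ∧
          ∀ k ∈ S, (Finset.univ.filter fun x => f x = k).card ≤ L).filter
        (fun f => Finset.univ.filter (fun x => f x = a) = T)).card
      = cntA m L a S (n - t) := by
    intro T hT
    have hTc : T.card = t := Finset.mem_powersetCard_univ.mp hT
    rw [Finset.filter_filter]
    have hcc : Tᶜ.card = n - t := by
      rw [Finset.card_compl, hTc, Fintype.card_fin]
    rw [← hcc, ← fixedFiber_card n m L a S ha T]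
    congr 1
    apply Finset.filter_congr
    intro f _
    constructor
    · rintro ⟨⟨hcard, hgood⟩, hfT⟩; exact ⟨hfT, hgood⟩
    · rintro ⟨hfT, hgood⟩; exact ⟨⟨by rw [hfT, hTc], hgood⟩, hfT⟩
  rw [Finset.sum_congr rfl hterm, Finset.sum_const, Finset.card_powersetCard,
    Finset.card_univ, Fintype.card_fin, smul_eq_mul]

lemma cnt_partition (n m L : ℕ) (a : Fin m) (S : Finset (Fin m))
    (P : ℕ → Prop) [DecidablePred P] :
    (Finset.univ.filter fun f : Fin n → Fin m =>
        P (Finset.univ.filter fun x => f x = a).card ∧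
        ∀ k ∈ S, (Finset.univ.filter fun x => f x = k).card ≤ L).card
    = ∑ t ∈ (Finset.range (n+1)).filter P,
        (Finset.univ.filter fun f : Fin n → Fin m =>
          (Finset.univ.filter fun x => f x = a).card = t ∧
          ∀ k ∈ S, (Finset.univ.filter fun x => f x = k).card ≤ L).card := by
  classical
  rw [Finset.card_eq_sum_card_fiberwise
      (f := fun f : Fin n → Fin m => (Finset.univ.filter fun x => f x = a).card)
      (t := (Finset.range (n+1)).filter P)
      (fun f hf => by
        rw [Finset.mem_coe, Finset.mem_filter] at hf ⊢
        refine ⟨Finset.mem_range.mpr ?_, hf.2.1⟩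
        calc (Finset.univ.filter fun x => f x = a).card
            ≤ (Finset.univ : Finset (Fin n)).card := Finset.card_filter_le _ _
          _ = n := by rw [Finset.card_univ, Fintype.card_fin]
          _ < n + 1 := Nat.lt_succ_self n)]
  refine Finset.sum_congr rfl fun t ht => ?_
  have hP : P t := (Finset.mem_filter.mp ht).2
  rw [Finset.filter_filter]
  congr 1
  apply Finset.filter_congr
  intro f _
  constructor
  · rintro ⟨⟨hPc, hgood⟩, hct⟩; exact ⟨hct, hgood⟩
  · rintro ⟨hct, hgood⟩; exact ⟨⟨by rw [hct]; exact hP, hgood⟩, hct⟩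

lemma corr_step (n m L : ℕ) (a : Fin m) (S : Finset (Fin m)) (ha : a ∉ S) :
    (Finset.univ.filter fun f : Fin n → Fin m =>
        ∀ k ∈ insert a S, (Finset.univ.filter fun x => f x = k).card ≤ L).card * m ^ n
    ≤ (∑ t ∈ (Finset.range (n+1)).filter (· ≤ L), n.choose t * (m-1)^(n-t)) *
      (Finset.univ.filter fun f : Fin n → Fin m =>
        ∀ k ∈ S, (Finset.univ.filter fun x => f x = k).card ≤ L).card := by
  classical
  set I := (Finset.range (n+1)).filter (· ≤ L) with hIdef
  set J := Finset.range (n+1) with hJdef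
  set B : ℕ → ℕ := fun t => (Finset.univ.filter fun f : Fin n → Fin m =>
      (Finset.univ.filter fun x => f x = a).card = t ∧
      ∀ k ∈ S, (Finset.univ.filter fun x => f x = k).card ≤ L).card with hBdef
  set A : ℕ → ℕ := fun t => (Finset.univ.filter fun f : Fin n → Fin m =>
      (Finset.univ.filter fun x => f x = a).card = t ∧
      ∀ k ∈ (∅ : Finset (Fin m)), (Finset.univ.filter fun x => f x = k).card ≤ L).card with hAdef
  have hins : (Finset.univ.filter fun f : Fin n → Fin m =>
      ∀ k ∈ insert a S, (Finset.univ.filter fun x => f x = k).card ≤ L).card = ∑ t ∈ I, B t := by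
    rw [← cnt_partition n m L a S (· ≤ L)]
    congr 1
    apply Finset.filter_congr
    intro f _
    exact Finset.forall_mem_insert a S _
  have hS : (Finset.univ.filter fun f : Fin n → Fin m =>
      ∀ k ∈ S, (Finset.univ.filter fun x => f x = k).card ≤ L).card = ∑ t ∈ J, B t := by
    have h1 := cnt_partition n m L a S (fun _ => True)
    rw [Finset.filter_true] at h1
    rw [← h1]
    congr 1
    apply Finset.filter_congr
    intro f _
    simp only [true_and]
  have hmn : m ^ n = ∑ t ∈ J, A t := by
    have h1 := cnt_partition n m L a (∅ : Finset (Fin m)) (fun _ => True)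
    rw [Finset.filter_true] at h1
    rw [← h1]
    have h2 : (Finset.univ.filter fun f : Fin n → Fin m =>
        True ∧ ∀ k ∈ (∅ : Finset (Fin m)), (Finset.univ.filter fun x => f x = k).card ≤ L)
        = Finset.univ := by
      apply Finset.filter_true_of_mem
      intro f _
      simp
    rw [h2, Finset.card_univ, Fintype.card_fun, Fintype.card_fin, Fintype.card_fin]
  have hTail : ∑ t ∈ I, n.choose t * (m-1)^(n-t) = ∑ t ∈ I, A t := by
    refine Finset.sum_congr rfl fun t ht => ?_
    rw [hAdef]
    beta_reduce
    rw [Bset_card n m L a ∅ (Finset.notMem_empty a) t, cntA_empty]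
  have hpoint : ∀ s ∈ I, ∀ t ∈ J, t ∉ I → B s * A t ≤ A s * B t := by
    intro s hs t ht htI
    have hsL : s ≤ L := (Finset.mem_filter.mp hs).2
    have hLt : L < t := by
      by_contra hc
      push_neg at hc
      exact htI (Finset.mem_filter.mpr ⟨ht, hc⟩)
    have hnt : n - t ≤ n - s := Nat.sub_le_sub_left (hsL.trans hLt.le) n
    have key := cntA_mono m L a S (n - t) (n - s) hnt
    rw [hBdef, hAdef]
    beta_reduce
    rw [Bset_card n m L a S ha s, Bset_card n m L a S ha t,
      Bset_card n m L a ∅ (Finset.notMem_empty a) s,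
      Bset_card n m L a ∅ (Finset.notMem_empty a) t, cntA_empty, cntA_empty]
    calc n.choose s * cntA m L a S (n - s) * (n.choose t * (m-1)^(n-t))
        = (n.choose s * n.choose t) * (cntA m L a S (n - s) * (m-1)^(n-t)) := by ring
      _ ≤ (n.choose s * n.choose t) * ((m-1)^(n-s) * cntA m L a S (n - t)) :=
          Nat.mul_le_mul_left _ key
      _ = n.choose s * (m-1)^(n-s) * (n.choose t * cntA m L a S (n - t)) := by ring
  rw [hins, hS, hmn, hTail]
  exact cheby I J (Finset.filter_subset _ _) A B hpoint

lemma main_ind (n m L : ℕ) (S : Finset (Fin m)) :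
    (Finset.univ.filter fun f : Fin n → Fin m =>
        ∀ k ∈ S, (Finset.univ.filter fun x => f x = k).card ≤ L).card * (m ^ n) ^ S.card
    ≤ (∑ t ∈ (Finset.range (n+1)).filter (· ≤ L), n.choose t * (m-1)^(n-t)) ^ S.card * m ^ n := by
  classical
  induction S using Finset.induction_on with
  | empty =>
    have h2 : (Finset.univ.filter fun f : Fin n → Fin m =>
        ∀ k ∈ (∅ : Finset (Fin m)), (Finset.univ.filter fun x => f x = k).card ≤ L)
        = Finset.univ :=
      Finset.filter_true_of_mem (fun f _ => by simp)
    rw [h2, Finset.card_empty, pow_zero, pow_zero, mul_one, one_mul, Finset.card_univ,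
      Fintype.card_fun, Fintype.card_fin, Fintype.card_fin]
  | @insert a S ha ih =>
    rw [Finset.card_insert_of_notMem ha]
    set T := ∑ t ∈ (Finset.range (n+1)).filter (· ≤ L), n.choose t * (m-1)^(n-t) with hT
    calc (Finset.univ.filter fun f : Fin n → Fin m =>
            ∀ k ∈ insert a S, (Finset.univ.filter fun x => f x = k).card ≤ L).card
              * (m ^ n) ^ (S.card + 1)
        = ((Finset.univ.filter fun f : Fin n → Fin m =>
            ∀ k ∈ insert a S, (Finset.univ.filter fun x => f x = k).card ≤ L).card * m ^ n)
              * (m ^ n) ^ S.card := by ring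
      _ ≤ (T * (Finset.univ.filter fun f : Fin n → Fin m =>
            ∀ k ∈ S, (Finset.univ.filter fun x => f x = k).card ≤ L).card) * (m ^ n) ^ S.card :=
          Nat.mul_le_mul_right _ (corr_step n m L a S ha)
      _ = T * ((Finset.univ.filter fun f : Fin n → Fin m =>
            ∀ k ∈ S, (Finset.univ.filter fun x => f x = k).card ≤ L).card * (m ^ n) ^ S.card) := by
          ring
      _ ≤ T * (T ^ S.card * m ^ n) := Nat.mul_le_mul_left _ ih
      _ = T ^ (S.card + 1) * m ^ n := by ring

lemma idx_eq (n L : ℕ) :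
    Finset.range (min L n + 1) = (Finset.range (n+1)).filter (· ≤ L) := by
  ext j
  simp only [Finset.mem_range, Finset.mem_filter, Nat.lt_succ_iff]
  omega

/-- **Negative dependence of multinomial cell loads** (Lemma 4.2, equal cell
probabilities): the probability that all fibers of a uniformly random function
`Fin n → Fin m` have size at most `L` is at most the product over the `m` cells of the
corresponding `Binomial(n, 1/m)` tail probabilities. -/
theorem multinomial_negative_dependence (n m L : ℕ) (hn : 0 < n) (hm : 0 < m) :
    ((Finset.univ.filter fun f : Fin n → Fin m =>
        ∀ k : Fin m, (Finset.univ.filter fun x => f x = k).card ≤ L).card : ℝ) / m ^ n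
      ≤ (∑ j ∈ Finset.range (min L n + 1),
          (Nat.choose n j : ℝ) * (1 / m) ^ j * (1 - 1 / m) ^ (n - j)) ^ m := by
  classical
  set T := ∑ t ∈ (Finset.range (n+1)).filter (· ≤ L), n.choose t * (m-1)^(n-t) with hT
  have h0 : (Finset.univ.filter fun f : Fin n → Fin m =>
        ∀ k : Fin m, (Finset.univ.filter fun x => f x = k).card ≤ L).card * (m ^ n) ^ m
      ≤ T ^ m * m ^ n := by
    have h1 := main_ind n m L (Finset.univ : Finset (Fin m))
    rw [Finset.card_univ, Fintype.card_fin] at h1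
    have h2 : (Finset.univ.filter fun f : Fin n → Fin m =>
          ∀ k : Fin m, (Finset.univ.filter fun x => f x = k).card ≤ L)
        = (Finset.univ.filter fun f : Fin n → Fin m =>
          ∀ k ∈ (Finset.univ : Finset (Fin m)), (Finset.univ.filter fun x => f x = k).card ≤ L) :=
      Finset.filter_congr (fun f _ => by simp)
    rw [h2]
    exact h1
  have hm0 : (m : ℝ) ≠ 0 := Nat.cast_ne_zero.mpr hm.ne'
  have hmn0 : (0 : ℝ) < (m : ℝ) ^ n := by positivity
  have hsum : (∑ j ∈ Finset.range (min L n + 1),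
      (Nat.choose n j : ℝ) * (1 / m) ^ j * (1 - 1 / m) ^ (n - j)) = (T : ℝ) / (m : ℝ) ^ n := by
    rw [idx_eq n L, hT]
    push_cast
    rw [Finset.sum_div]
    refine Finset.sum_congr rfl fun j hj => ?_
    have hjn : j ≤ n := by
      have h5 := (Finset.mem_filter.mp hj).1
      rw [Finset.mem_range] at h5
      exact Nat.lt_succ_iff.mp h5
    have hm1 : ((m - 1 : ℕ) : ℝ) = (m : ℝ) - 1 := by
      have : (1 : ℕ) ≤ m := hm
      push_cast [this]
      ring
    have h11 : (1 - 1 / (m:ℝ)) = ((m:ℝ) - 1) / m := by field_simp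
    rw [h11, hm1, div_pow, div_pow]
    have hmm : (m:ℝ)^j * (m:ℝ)^(n-j) = (m:ℝ)^n := by
      rw [← pow_add, Nat.add_sub_cancel' hjn]
    rw [← hmm]
    field_simp
    rw [one_pow, mul_one]
  rw [hsum, div_pow, div_le_div_iff₀ hmn0 (by positivity)]
  calc ((Finset.univ.filter fun f : Fin n → Fin m =>
        ∀ k : Fin m, (Finset.univ.filter fun x => f x = k).card ≤ L).card : ℝ) * ((m:ℝ)^n)^m
      = (((Finset.univ.filter fun f : Fin n → Fin m =>
        ∀ k : Fin m, (Finset.univ.filter fun x => f x = k).card ≤ L).card * (m^n)^m : ℕ) : ℝ) := by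
        push_cast; ring
    _ ≤ ((T ^ m * m ^ n : ℕ) : ℝ) := by exact_mod_cast h0
    _ = (T:ℝ)^m * (m:ℝ)^n := by push_cast; ring
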